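/- Let n ≥ 2, β ∈ [0,n), a = 1 − β/n, and α > 0 with α/α_n + β/n = 1 where α_n = n·ω_{n-1}^{1/(n-1)}. Then for every u ∈ W^{1,n}_{0,rad}(B_1), F_{B_1}(u) = (1/a)·J_{B_1}(T_a u), where F_{B_1}(u) = ∫_{B_1} (e^{α|u|^{n/(n-1)}} − 1)/|x|^β dx, J_{B_1}(v) = ∫_{B_1} (e^{α_n|v|^{n/(n-1)}} − 1) dx, and (T_a u)(x) = a^{(n-1)/n} u(|x|^{1/a}). -/

import Mathlib

open MeasureTheory Metric Set Filter
open scoped RealInnerProductSpace ENNReal Topology NNReal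

noncomputable section

abbrev E (n : ℕ) := EuclideanSpace ℝ (Fin n)

/-- ω_{n-1}, the H^{n-1} measure of the unit sphere, equals n times the volume of the unit ball. -/
def sphereVol (n : ℕ) : ℝ := n * (volume (Metric.ball (0 : E n) 1)).toReal

/-- The transformation T_a acting on (the radial profile `f` of) a radial function:
(T_a u)(x) = a^{(n-1)/n} · u(|x|^{1/a}). -/
def Ta (n : ℕ) (a : ℝ) (f : ℝ → ℝ) : E n → ℝ :=
  fun x => a ^ (((n : ℝ) - 1) / (n : ℝ)) * f (‖x‖ ^ (1 / a))

/-- With a = 1 − β/n and α/α_n + β/n = 1,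
F_{B₁}(u) = (1/a)·J_{B₁}(T_a u) for every radial u ∈ W^{1,n}_{0,rad}(B₁). -/
theorem stmt2 (n : ℕ) (hn : 2 ≤ n) (α β a : ℝ) (hα : 0 < α) (hβ0 : 0 ≤ β) (hβn : β < n)
    (ha : a = 1 - β / n)
    (hsum : α / ((n : ℝ) * sphereVol n ^ (1 / ((n : ℝ) - 1))) + β / (n : ℝ) = 1)
    (u : E n → ℝ) (f : ℝ → ℝ) (hrad : ∀ x : E n, u x = f ‖x‖)
    (hdiff : ContDiff ℝ 1 u) (hzero : ∀ x : E n, 1 ≤ ‖x‖ → u x = 0) :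
    (∫ x in ball (0 : E n) 1,
        (Real.exp (α * |u x| ^ ((n : ℝ) / ((n : ℝ) - 1))) - 1) / ‖x‖ ^ β) =
      (1 / a) * ∫ x in ball (0 : E n) 1,
        (Real.exp ((n : ℝ) * sphereVol n ^ (1 / ((n : ℝ) - 1)) *
          |Ta n a f x| ^ ((n : ℝ) / ((n : ℝ) - 1))) - 1) := by
  classical
  have hn1 : (1:ℝ) < (n:ℝ) := by exact_mod_cast (by omega : 1 < n)
  have hn0 : (0:ℝ) < (n:ℝ) := by linarith
  haveI : Nontrivial (E n) := by
    refine ⟨EuclideanSpace.single ⟨0, by omega⟩ 1, 0, fun h => ?_⟩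
    have := congrArg (fun v : E n => v ⟨0, by omega⟩) h
    simpa using this
  set p : ℝ := (n:ℝ)/((n:ℝ)-1) with hp
  set αn : ℝ := (n : ℝ) * sphereVol n ^ (1 / ((n : ℝ) - 1)) with hαn
  have hVpos : 0 < (volume (ball (0 : E n) 1)).toReal :=
    ENNReal.toReal_pos (measure_ball_pos _ _ one_pos).ne' measure_ball_lt_top.ne
  have hsV : 0 < sphereVol n := by
    unfold sphereVol; positivity
  have hαnpos : 0 < αn := by rw [hαn]; positivity
  have ha0 : 0 < a := by
    rw [ha, sub_pos, div_lt_one hn0]; exact hβn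
  have haval : α = αn * a := by
    have h1 : α / αn = a := by rw [ha]; linarith [hsum]
    have := (div_eq_iff hαnpos.ne').1 h1
    linarith [this]
  have han : a * (n:ℝ) = (n:ℝ) - β := by
    rw [ha]; field_simp
  set g : ℝ → ℝ := fun r => Real.exp (α * |f r| ^ p) - 1 with hg
  set F₁ : ℝ → ℝ := fun r => if r < 1 then g r / r ^ β else 0 with hF₁
  set G₁ : ℝ → ℝ := fun s =>
    if s < 1 then Real.exp (αn * |a ^ (((n:ℝ)-1)/(n:ℝ)) * f (s ^ (1/a))| ^ p) - 1 else 0 with hG₁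
  have hL : (∫ x in ball (0 : E n) 1, (Real.exp (α * |u x| ^ p) - 1) / ‖x‖ ^ β)
      = ∫ x : E n, F₁ ‖x‖ := by
    rw [← integral_indicator measurableSet_ball]
    congr 1; ext x
    by_cases hx : x ∈ ball (0 : E n) 1
    · have hx1 : ‖x‖ < 1 := mem_ball_zero_iff.mp hx
      simp [indicator_of_mem hx, hF₁, hx1, hrad x, hg]
    · have hx1 : ¬ ‖x‖ < 1 := fun h => hx (mem_ball_zero_iff.mpr h)
      simp [indicator_of_notMem hx, hF₁, hx1]
  have hR : (∫ x in ball (0 : E n) 1,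
        (Real.exp (αn * |Ta n a f x| ^ p) - 1)) = ∫ x : E n, G₁ ‖x‖ := by
    rw [← integral_indicator measurableSet_ball]
    congr 1; ext x
    by_cases hx : x ∈ ball (0 : E n) 1
    · have hx1 : ‖x‖ < 1 := mem_ball_zero_iff.mp hx
      simp [indicator_of_mem hx, hG₁, hx1, Ta]
    · have hx1 : ¬ ‖x‖ < 1 := fun h => hx (mem_ball_zero_iff.mpr h)
      simp [indicator_of_notMem hx, hG₁, hx1]
  have hpolar1 : (∫ x : E n, F₁ ‖x‖)
      = n • (volume (ball (0:E n) 1)).toReal • ∫ y in Ioi (0:ℝ), y ^ (n-1) • F₁ y := by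
    have := integral_fun_norm_addHaar (volume : Measure (E n)) F₁
    rwa [finrank_euclideanSpace_fin] at this
  have hpolar2 : (∫ x : E n, G₁ ‖x‖)
      = n • (volume (ball (0:E n) 1)).toReal • ∫ y in Ioi (0:ℝ), y ^ (n-1) • G₁ y := by
    have := integral_fun_norm_addHaar (volume : Measure (E n)) G₁
    rwa [finrank_euclideanSpace_fin] at this
  have hcast : ((n - 1 : ℕ) : ℝ) = (n : ℝ) - 1 := by
    have : 1 ≤ n := by omega
    push_cast [this]; ring
  have key : (∫ s in Ioi (0:ℝ), s ^ (n-1) • G₁ s)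
      = a * ∫ y in Ioi (0:ℝ), y ^ (n-1) • F₁ y := by
    rw [← integral_comp_rpow_Ioi_of_pos (g := fun s => s ^ (n-1) • G₁ s) ha0,
      ← smul_eq_mul, ← integral_smul]
    refine setIntegral_congr_fun measurableSet_Ioi (fun x hx => ?_)
    have hx0 : (0:ℝ) < x := hx
    have hlt : x ^ a < 1 ↔ x < 1 := Real.rpow_lt_one_iff' hx0.le ha0
    by_cases hx1 : x < 1
    · have hxa1 : x ^ a < 1 := hlt.mpr hx1
      have harg : (x ^ a) ^ (1/a) = x := by
        rw [← Real.rpow_mul hx0.le, mul_one_div_cancel ha0.ne', Real.rpow_one]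
      have habs : |a ^ (((n:ℝ)-1)/(n:ℝ)) * f ((x ^ a) ^ (1/a))| ^ p
          = a * |f x| ^ p := by
        rw [harg, abs_mul, abs_of_nonneg (Real.rpow_nonneg ha0.le _),
          Real.mul_rpow (Real.rpow_nonneg ha0.le _) (abs_nonneg _),
          ← Real.rpow_mul ha0.le]
        have hne : ((n:ℝ)-1) ≠ 0 := by linarith
        have : (((n:ℝ)-1)/(n:ℝ)) * p = 1 := by
          rw [hp]; field_simp
        rw [this, Real.rpow_one]
      have hval : G₁ (x ^ a) = g x := by
        rw [hG₁]; simp only [hxa1, if_true]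
        rw [habs, hg]
        congr 2
        rw [haval]; ring
      have hF : F₁ x = g x / x ^ β := by rw [hF₁]; simp [hx1]
      simp only [hval, hF, smul_eq_mul]
      -- now polynomial in rpow
      rw [← Real.rpow_natCast (x ^ a) (n-1), ← Real.rpow_mul hx0.le, hcast,
        ← Real.rpow_natCast x (n-1), hcast]
      rw [div_eq_mul_inv, ← Real.rpow_neg hx0.le]
      rw [show (a * x ^ (a-1)) * (x ^ (a * ((n:ℝ)-1)) * g x)
          = a * (x ^ (a-1) * x ^ (a * ((n:ℝ)-1)) * g x) from by ring,
        ← Real.rpow_add hx0]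
      rw [show a * (x ^ ((n:ℝ)-1) * (g x * x ^ (-β)))
          = a * (x ^ ((n:ℝ)-1) * x ^ (-β) * g x) from by ring, ← Real.rpow_add hx0]
      have : a - 1 + a * ((n:ℝ)-1) = (n:ℝ) - 1 + -β := by
        linear_combination han
      rw [this]
    · have hxa1 : ¬ x ^ a < 1 := fun h => hx1 (hlt.mp h)
      have h1 : G₁ (x ^ a) = 0 := by rw [hG₁]; simp [hxa1]
      have h2 : F₁ x = 0 := by rw [hF₁]; simp [hx1]
      simp [h1, h2]
  rw [hL, hR, hpolar1, hpolar2, key, nsmul_eq_mul, nsmul_eq_mul, smul_eq_mul, smul_eq_mul]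
  field_simp
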